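/- Let p be an odd prime, n ≥ 1, α ∈ Z_p, and 0 ≤ j < p^{n-1} with α ≡ j mod p^{n-1}. Then the series ∑_{i≥0} binom(p^{-1}u_n, i)·((exp(αp) − exp(jp))/exp(jp))^i converges in Λ[1/p], where Λ = Z_p[[T]]⟨T^{p^{n-1}}/p⟩ and u_n = log(1+T), because ((exp(αp) − exp(jp))/exp(jp))^i ∈ p^{in}Z_p and binom(p^{-1}u_n, i) ∈ p^{-i(n − p/(p-1))}Λ. -/

import Mathlib

open Filter

/-- The `p`-adic exponential `exp(x) = ∑_{n ≥ 0} x^n / n!` (convergent on `pℤ_p` for `p` odd). -/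
noncomputable def padicExp {p : ℕ} [Fact p.Prime] (x : ℚ_[p]) : ℚ_[p] :=
  ∑' n : ℕ, ((n.factorial : ℚ_[p]))⁻¹ * x ^ n

/-- The formal logarithm `log(1+T) = ∑_{k ≥ 1} (-1)^{k+1} T^k / k` in `ℚ_p[[T]]`. -/
noncomputable def logOnePlusT (p : ℕ) [Fact p.Prime] : PowerSeries ℚ_[p] :=
  PowerSeries.mk fun k => if k = 0 then 0 else (-1) ^ (k + 1) / (k : ℚ_[p])

/-- Membership in `p^s·Λ` where `Λ = ℤ_p[[T]]⟨T^{p^{n-1}}/p⟩`, described inside `ℚ_p[[T]]`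
coefficientwise. -/
def MemLambda (p n : ℕ) [Fact p.Prime] (s : ℝ) (f : PowerSeries ℚ_[p]) : Prop :=
  (∀ k : ℕ, ‖PowerSeries.coeff k f‖ ≤ (p : ℝ) ^ (-s) * (p : ℝ) ^ (k / p ^ (n - 1))) ∧
    Tendsto (fun k : ℕ => ‖PowerSeries.coeff k f‖ / (p : ℝ) ^ (k / p ^ (n - 1)))
      atTop (nhds 0)

/-- The generalized binomial coefficient `binom(p^{-1}u_n, i)` in `Λ[1/p]`, `u_n = log(1+T)`. -/
noncomputable def binomGM (p : ℕ) [Fact p.Prime] (i : ℕ) : PowerSeries ℚ_[p] :=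
  PowerSeries.C ((i.factorial : ℚ_[p]))⁻¹ *
    ∏ t ∈ Finset.range i,
      (PowerSeries.C ((p : ℚ_[p]))⁻¹ * logOnePlusT p - (t : PowerSeries ℚ_[p]))

/-- The element `c = (exp(αp) − exp(jp))/exp(jp)` of `ℚ_p`. -/
noncomputable def twistElt {p : ℕ} [Fact p.Prime] (α : ℚ_[p]) (j : ℕ) : ℚ_[p] :=
  (padicExp (α * (p : ℚ_[p])) - padicExp ((j : ℚ_[p]) * (p : ℚ_[p]))) / padicExp ((j : ℚ_[p]) * (p : ℚ_[p]))

namespace BinomConvAux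

/-- The growth weight `p^⌊k/p^{n-1}⌋`. -/
noncomputable def Wt (p n k : ℕ) : ℝ := (p : ℝ) ^ (k / p ^ (n - 1))

/-- Growth-boundedness with coefficient decay: `f ∈ C·Λ` (coefficientwise). -/
def Nice (p n : ℕ) [Fact p.Prime] (C : ℝ) (f : PowerSeries ℚ_[p]) : Prop :=
  (∀ k : ℕ, ‖PowerSeries.coeff k f‖ ≤ C * Wt p n k) ∧
    Tendsto (fun k : ℕ => ‖PowerSeries.coeff k f‖ / Wt p n k) atTop (nhds 0)

variable {p n : ℕ} [Fact p.Prime]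

lemma hp0R : (0 : ℝ) < p := by exact_mod_cast (Fact.out : p.Prime).pos

lemma hp1R : (1 : ℝ) < p := by exact_mod_cast (Fact.out : p.Prime).one_lt

lemma Wt_pos (k : ℕ) : (0 : ℝ) < Wt p n k := pow_pos hp0R _

lemma one_le_Wt (k : ℕ) : (1 : ℝ) ≤ Wt p n k := one_le_pow₀ hp1R.le

lemma Wt_mul_Wt_le (a b : ℕ) : Wt p n a * Wt p n b ≤ Wt p n (a + b) := by
  have hq : 0 < p ^ (n - 1) := pow_pos (Fact.out : p.Prime).pos _
  rw [Wt, Wt, Wt, ← pow_add]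
  refine pow_le_pow_right₀ hp1R.le ?_
  rw [Nat.le_div_iff_mul_le hq, add_mul]
  exact add_le_add (Nat.div_mul_le_self a _) (Nat.div_mul_le_self b _)

lemma memLambda_of_nice {s : ℝ} {f : PowerSeries ℚ_[p]}
    (h : Nice p n ((p : ℝ) ^ (-s)) f) : MemLambda p n s f := h

lemma Nice.of_le {C C' : ℝ} {f : PowerSeries ℚ_[p]} (h : Nice p n C f) (hC : C ≤ C') :
    Nice p n C' f :=
  ⟨fun k => (h.1 k).trans (mul_le_mul_of_nonneg_right hC (Wt_pos k).le), h.2⟩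

lemma Nice.neg {C : ℝ} {f : PowerSeries ℚ_[p]} (h : Nice p n C f) : Nice p n C (-f) :=
  ⟨fun k => by simpa using h.1 k, by simpa using h.2⟩

lemma Nice.zero {C : ℝ} (hC : 0 ≤ C) : Nice p n C (0 : PowerSeries ℚ_[p]) := by
  constructor
  · intro k
    simp only [map_zero, norm_zero]
    have := (Wt_pos (p := p) (n := n) k).le
    positivity
  · simpa using tendsto_const_nhds

lemma Nice.add {C : ℝ} {f g : PowerSeries ℚ_[p]} (hf : Nice p n C f) (hg : Nice p n C g) :
    Nice p n C (f + g) := by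
  constructor
  · intro k
    rw [map_add]
    exact (IsUltrametricDist.norm_add_le_max _ _).trans (max_le (hf.1 k) (hg.1 k))
  · apply squeeze_zero (g := fun k => ‖PowerSeries.coeff k f‖ / Wt p n k
      + ‖PowerSeries.coeff k g‖ / Wt p n k)
      (fun k => div_nonneg (norm_nonneg _) (Wt_pos k).le) (fun k => ?_)
      (by simpa using hf.2.add hg.2)
    show ‖PowerSeries.coeff k (f + g)‖ / Wt p n k ≤
      ‖PowerSeries.coeff k f‖ / Wt p n k + ‖PowerSeries.coeff k g‖ / Wt p n k
    rw [map_add, ← add_div]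
    exact (div_le_div_iff_of_pos_right (Wt_pos k)).2 (norm_add_le _ _)

lemma nice_sum {ι : Type*} {s : Finset ι} {F : ι → PowerSeries ℚ_[p]} {C : ℝ} (hC : 0 ≤ C)
    (h : ∀ i ∈ s, Nice p n C (F i)) : Nice p n C (∑ i ∈ s, F i) := by
  classical
  induction s using Finset.induction_on with
  | empty => simpa using Nice.zero hC
  | @insert a s hx ih =>
    rw [Finset.sum_insert hx]
    exact (h _ (Finset.mem_insert_self _ _)).add
      (ih fun i hi => h i (Finset.mem_insert_of_mem hi))

lemma nice_C (c : ℚ_[p]) : Nice p n ‖c‖ (PowerSeries.C c) := by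
  constructor
  · intro k
    rw [PowerSeries.coeff_C]
    split_ifs with h
    · exact le_mul_of_one_le_right (norm_nonneg c) (one_le_Wt k)
    · rw [norm_zero]
      have := (Wt_pos (p := p) (n := n) k).le
      positivity
  · have heq : (fun _ : ℕ => (0:ℝ)) =ᶠ[atTop]
        fun k => ‖PowerSeries.coeff k (PowerSeries.C c)‖ / Wt p n k := by
      filter_upwards [eventually_ge_atTop 1] with k hk
      rw [PowerSeries.coeff_C, if_neg (by omega), norm_zero, zero_div]
    exact Filter.Tendsto.congr' heq tendsto_const_nhds

lemma Nice.mul {A B : ℝ} {f g : PowerSeries ℚ_[p]} (hA : 0 ≤ A) (hB : 0 ≤ B)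
    (hf : Nice p n A f) (hg : Nice p n B g) : Nice p n (A * B) (f * g) := by
  have hW : ∀ k : ℕ, (0:ℝ) < Wt p n k := Wt_pos
  constructor
  · intro k
    rw [PowerSeries.coeff_mul]
    apply IsUltrametricDist.norm_sum_le_of_forall_le_of_nonneg
      (by have := (hW k).le; positivity : (0:ℝ) ≤ A * B * Wt p n k)
    intro x hx
    have hxk : x.1 + x.2 = k := Finset.HasAntidiagonal.mem_antidiagonal.1 hx
    calc ‖PowerSeries.coeff x.1 f * PowerSeries.coeff x.2 g‖
        = ‖PowerSeries.coeff x.1 f‖ * ‖PowerSeries.coeff x.2 g‖ := norm_mul _ _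
      _ ≤ (A * Wt p n x.1) * (B * Wt p n x.2) :=
          mul_le_mul (hf.1 _) (hg.1 _) (norm_nonneg _)
            (by have := (hW x.1).le; positivity)
      _ = A * B * (Wt p n x.1 * Wt p n x.2) := by ring
      _ ≤ A * B * Wt p n k := by
          rw [← hxk]
          exact mul_le_mul_of_nonneg_left (Wt_mul_Wt_le _ _) (by positivity)
  · rw [Metric.tendsto_atTop]
    intro ε hε
    have hABpos : (0:ℝ) < A + B + 1 := by linarith
    have hε' : 0 < ε / (A + B + 1) := div_pos hε hABpos
    obtain ⟨K₁, hK₁⟩ := Metric.tendsto_atTop.1 hf.2 _ hε'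
    obtain ⟨K₂, hK₂⟩ := Metric.tendsto_atTop.1 hg.2 _ hε'
    refine ⟨K₁ + K₂, fun k hk => ?_⟩
    set ε' := ε / (A + B + 1) with hε'def
    have hε'0 : 0 < ε' := hε'
    have hf' : ∀ a, K₁ ≤ a → ‖PowerSeries.coeff a f‖ ≤ ε' * Wt p n a := by
      intro a ha
      have h2 := hK₁ a ha
      rw [Real.dist_eq, sub_zero,
        abs_of_nonneg (div_nonneg (norm_nonneg _) (hW a).le)] at h2
      exact ((div_lt_iff₀ (hW a)).1 h2).le.trans (by rw [mul_comm])
    have hg' : ∀ a, K₂ ≤ a → ‖PowerSeries.coeff a g‖ ≤ ε' * Wt p n a := by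
      intro a ha
      have h2 := hK₂ a ha
      rw [Real.dist_eq, sub_zero,
        abs_of_nonneg (div_nonneg (norm_nonneg _) (hW a).le)] at h2
      exact ((div_lt_iff₀ (hW a)).1 h2).le.trans (by rw [mul_comm])
    have hbound : ‖PowerSeries.coeff k (f * g)‖ ≤ ε' * (A + B) * Wt p n k := by
      rw [PowerSeries.coeff_mul]
      apply IsUltrametricDist.norm_sum_le_of_forall_le_of_nonneg
        (by have := (hW k).le; positivity : (0:ℝ) ≤ ε' * (A + B) * Wt p n k)
      intro x hx
      have hxk : x.1 + x.2 = k := Finset.HasAntidiagonal.mem_antidiagonal.1 hx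
      have hWW : Wt p n x.1 * Wt p n x.2 ≤ Wt p n k := hxk ▸ Wt_mul_Wt_le _ _
      rcases le_or_gt K₁ x.1 with h | h
      · calc ‖PowerSeries.coeff x.1 f * PowerSeries.coeff x.2 g‖
            = ‖PowerSeries.coeff x.1 f‖ * ‖PowerSeries.coeff x.2 g‖ := norm_mul _ _
          _ ≤ (ε' * Wt p n x.1) * (B * Wt p n x.2) :=
              mul_le_mul (hf' _ h) (hg.1 _) (norm_nonneg _)
                (by have := (hW x.1).le; positivity)
          _ = ε' * B * (Wt p n x.1 * Wt p n x.2) := by ring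
          _ ≤ ε' * B * Wt p n k := by
              exact mul_le_mul_of_nonneg_left hWW (by positivity)
          _ ≤ ε' * (A + B) * Wt p n k := by
              have h9 : ε' * B ≤ ε' * (A + B) := by nlinarith
              exact mul_le_mul_of_nonneg_right h9 (hW k).le
      · have h2 : K₂ ≤ x.2 := by omega
        calc ‖PowerSeries.coeff x.1 f * PowerSeries.coeff x.2 g‖
            = ‖PowerSeries.coeff x.1 f‖ * ‖PowerSeries.coeff x.2 g‖ := norm_mul _ _
          _ ≤ (A * Wt p n x.1) * (ε' * Wt p n x.2) :=
              mul_le_mul (hf.1 _) (hg' _ h2) (norm_nonneg _)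
                (by have := (hW x.1).le; positivity)
          _ = ε' * A * (Wt p n x.1 * Wt p n x.2) := by ring
          _ ≤ ε' * A * Wt p n k := by
              exact mul_le_mul_of_nonneg_left hWW (by positivity)
          _ ≤ ε' * (A + B) * Wt p n k := by
              have h9 : ε' * A ≤ ε' * (A + B) := by nlinarith
              exact mul_le_mul_of_nonneg_right h9 (hW k).le
    rw [Real.dist_eq, sub_zero,
      abs_of_nonneg (div_nonneg (norm_nonneg _) (hW k).le), div_lt_iff₀ (hW k)]
    have hfin : ε' * (A + B) < ε := by
      rw [hε'def, div_mul_eq_mul_div, div_lt_iff₀ hABpos]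
      nlinarith
    calc ‖PowerSeries.coeff k (f * g)‖ ≤ ε' * (A + B) * Wt p n k := hbound
      _ < ε * Wt p n k := mul_lt_mul_of_pos_right hfin (hW k)

lemma nice_prod {D : ℝ} (hD : 0 ≤ D) {F : ℕ → PowerSeries ℚ_[p]}
    (h : ∀ t, Nice p n D (F t)) (i : ℕ) :
    Nice p n (D ^ i) (∏ t ∈ Finset.range i, F t) := by
  induction i with
  | zero =>
    simpa using (by simpa using nice_C (p := p) (n := n) (1 : ℚ_[p]) : Nice p n 1 1)
  | succ i ih =>
    rw [Finset.prod_range_succ, pow_succ]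
    exact ih.mul (pow_nonneg hD i) hD (h i)

/-! ### Norms of natural numbers in `ℚ_p` -/

lemma norm_natCast_inv (k : ℕ) (hk : k ≠ 0) :
    ‖((k : ℚ_[p]))⁻¹‖ = (p : ℝ) ^ (padicValNat p k : ℤ) := by
  have hk' : ((k : ℚ_[p])) ≠ 0 := Nat.cast_ne_zero.mpr hk
  rw [norm_inv, Padic.norm_eq_zpow_neg_valuation hk', Padic.valuation_natCast, zpow_neg, inv_inv]

lemma val_key (hn : 1 ≤ n) {k : ℕ} (hk : k ≠ 0) :
    padicValNat p k + 2 ≤ n + k / p ^ (n - 1) := by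
  have hp := (Fact.out : p.Prime)
  set v := padicValNat p k with hv
  by_cases h : v + 2 ≤ n
  · exact h.trans (Nat.le_add_right _ _)
  · have h1 : p ^ v ≤ k := Nat.le_of_dvd (Nat.pos_of_ne_zero hk) pow_padicValNat_dvd
    have hnv : n - 1 ≤ v := by omega
    have h2 : p ^ v / p ^ (n - 1) ≤ k / p ^ (n - 1) := Nat.div_le_div_right h1
    rw [Nat.pow_div hnv hp.pos] at h2
    have h4 := Nat.lt_pow_self (n := v - (n - 1)) hp.one_lt
    omega

lemma two_mul_val_factorial_le (hp3 : 3 ≤ p) (i : ℕ) :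
    2 * padicValNat p i.factorial ≤ i := by
  have h := sub_one_mul_padicValNat_factorial (p := p) i
  have h2 : (p - 1) * padicValNat p i.factorial ≤ i := by omega
  calc 2 * padicValNat p i.factorial ≤ (p - 1) * padicValNat p i.factorial :=
        Nat.mul_le_mul_right _ (by omega)
    _ ≤ i := h2

lemma val_factorial_le_real (hp3 : 3 ≤ p) (i : ℕ) :
    (padicValNat p i.factorial : ℝ) * ((p : ℝ) - 1) ≤ i := by
  have h := sub_one_mul_padicValNat_factorial (p := p) i
  have h2 : (p - 1) * padicValNat p i.factorial ≤ i := by omega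
  have h3 : ((p : ℝ) - 1) = ((p - 1 : ℕ) : ℝ) := by
    rw [Nat.cast_sub (by omega)]; norm_num
  rw [h3, mul_comm, ← Nat.cast_mul]
  exact_mod_cast h2

/-! ### The k/W k → 0 limit -/

lemma tendsto_k_div_Wt : Tendsto (fun k : ℕ => (k : ℝ) / Wt p n k) atTop (nhds 0) := by
  have hp := (Fact.out : p.Prime)
  have hp0 : (0:ℝ) < p := hp0R
  have hp1 : (1:ℝ) < p := hp1R
  set q := p ^ (n - 1) with hq
  have hqpos : 0 < q := pow_pos hp.pos _
  have hr0 : (0:ℝ) ≤ (p:ℝ)⁻¹ := by positivity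
  have hr1 : (p:ℝ)⁻¹ < 1 := by
    rw [inv_lt_one_iff₀]; right; exact hp1
  have h1 : Tendsto (fun m : ℕ => (m : ℝ) * ((p:ℝ)⁻¹) ^ m) atTop (nhds 0) := by
    have hs := summable_pow_mul_geometric_of_norm_lt_one (R := ℝ) 1
      (r := (p:ℝ)⁻¹) (by rwa [Real.norm_eq_abs, abs_of_nonneg hr0])
    have := hs.tendsto_atTop_zero
    simpa using this
  have h2 : Tendsto (fun m : ℕ => ((p:ℝ)⁻¹) ^ m) atTop (nhds 0) :=
    tendsto_pow_atTop_nhds_zero_of_lt_one hr0 hr1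
  have hg : Tendsto (fun m : ℕ => (q : ℝ) * ((m : ℝ) + 1) * ((p:ℝ)⁻¹) ^ m) atTop (nhds 0) := by
    have h3 := (h1.add h2).const_mul (q : ℝ)
    simp only [add_zero, mul_zero] at h3
    refine h3.congr (fun m => ?_)
    ring
  have hdiv : Tendsto (fun k : ℕ => k / q) atTop atTop := by
    rw [tendsto_atTop_atTop]
    intro b
    refine ⟨b * q, fun k hk => ?_⟩
    rw [Nat.le_div_iff_mul_le hqpos]
    exact hk
  have hcomp := hg.comp hdiv
  apply squeeze_zero (fun k => div_nonneg (Nat.cast_nonneg k) (Wt_pos k).le) (fun k => ?_) hcomp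
  have hkle : (k : ℝ) ≤ (q : ℝ) * (((k / q : ℕ) : ℝ) + 1) := by
    have hdm := Nat.div_add_mod k q
    have hmod := Nat.mod_lt k hqpos
    have : k ≤ q * (k / q) + q := by omega
    push_cast
    calc (k : ℝ) ≤ (q : ℝ) * ((k / q : ℕ) : ℝ) + q := by exact_mod_cast this
      _ = (q : ℝ) * (((k / q : ℕ) : ℝ) + 1) := by ring
  show (k : ℝ) / Wt p n k ≤ (q : ℝ) * (((k / q : ℕ) : ℝ) + 1) * ((p:ℝ)⁻¹) ^ (k / q)
  have hWt : Wt p n k = (p : ℝ) ^ (k / q) := rfl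
  have hpow : (0:ℝ) < (p:ℝ) ^ (k / q) := by positivity
  rw [hWt, div_le_iff₀ hpow, inv_pow, mul_assoc, inv_mul_cancel₀ hpow.ne', mul_one]
  exact hkle

/-! ### The factors of the binomial product -/

lemma coeff_factor (t k : ℕ) :
    PowerSeries.coeff k
      (PowerSeries.C ((p : ℚ_[p]))⁻¹ * logOnePlusT p - (t : PowerSeries ℚ_[p])) =
    if k = 0 then -(t : ℚ_[p]) else ((p : ℚ_[p]))⁻¹ * ((-1) ^ (k + 1) / (k : ℚ_[p])) := by
  rw [map_sub, PowerSeries.coeff_C_mul, logOnePlusT, PowerSeries.coeff_mk,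
    show ((t : PowerSeries ℚ_[p])) = PowerSeries.C (t : ℚ_[p]) from
      (map_natCast (PowerSeries.C) t).symm,
    PowerSeries.coeff_C]
  split_ifs with h
  · simp
  · simp

lemma norm_coeff_factor (t : ℕ) {k : ℕ} (hk : k ≠ 0) :
    ‖PowerSeries.coeff k
      (PowerSeries.C ((p : ℚ_[p]))⁻¹ * logOnePlusT p - (t : PowerSeries ℚ_[p]))‖ =
    (p : ℝ) * (p : ℝ) ^ (padicValNat p k) := by
  rw [coeff_factor, if_neg hk, norm_mul, norm_inv, Padic.norm_p, inv_inv, norm_div,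
    norm_pow, norm_neg, norm_one, one_pow, one_div, ← norm_inv, norm_natCast_inv k hk,
    zpow_natCast]

lemma nice_factor (hn : 1 ≤ n) (t : ℕ) :
    Nice p n ((p : ℝ) ^ (n - 1))
      (PowerSeries.C ((p : ℚ_[p]))⁻¹ * logOnePlusT p - (t : PowerSeries ℚ_[p])) := by
  have hp := (Fact.out : p.Prime)
  have hp0 : (0:ℝ) < p := hp0R
  have hp1 : (1:ℝ) < p := hp1R
  constructor
  · intro k
    rcases Nat.eq_zero_or_pos k with rfl | hk
    · rw [coeff_factor, if_pos rfl, norm_neg]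
      have ht : ‖((t : ℚ_[p]))‖ ≤ 1 := by
        have h2 := Padic.norm_int_le_one (p := p) (t : ℤ)
        push_cast at h2
        exact h2
      have hW0 : Wt p n 0 = 1 := by simp [Wt]
      calc ‖((t:ℚ_[p]))‖ ≤ 1 := ht
        _ ≤ (p:ℝ)^(n-1) * Wt p n 0 := by
            rw [hW0, mul_one]
            exact one_le_pow₀ hp1.le
    · rw [norm_coeff_factor t hk.ne']
      have hkey := val_key (p := p) hn hk.ne'
      calc (p:ℝ) * (p:ℝ)^(padicValNat p k) = (p:ℝ)^(1 + padicValNat p k) := by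
            rw [pow_add, pow_one]
        _ ≤ (p:ℝ)^((n-1) + k / p^(n-1)) := pow_le_pow_right₀ hp1.le (by omega)
        _ = (p:ℝ)^(n-1) * Wt p n k := by rw [pow_add]; rfl
  · have hlim : Tendsto (fun k : ℕ => (p:ℝ) * ((k:ℝ) / Wt p n k)) atTop (nhds 0) := by
      have h2 := (tendsto_k_div_Wt (p := p) (n := n)).const_mul ((p:ℝ))
      simpa using h2
    apply squeeze_zero'
      (Eventually.of_forall fun k => div_nonneg (norm_nonneg _) (Wt_pos k).le) ?_ hlim
    filter_upwards [eventually_ge_atTop 1] with k hk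
    have hk0 : k ≠ 0 := by omega
    rw [norm_coeff_factor t hk0]
    have h1 : (p:ℝ)^(padicValNat p k) ≤ (k:ℝ) := by
      have h2 := Nat.le_of_dvd (Nat.pos_of_ne_zero hk0) (pow_padicValNat_dvd (p := p) (n := k))
      exact_mod_cast h2
    rw [← mul_div_assoc]
    exact (div_le_div_iff_of_pos_right (Wt_pos k)).2 (mul_le_mul_of_nonneg_left h1 hp0.le)

/-! ### The p-adic exponential -/

lemma exp_term_le (hp3 : 3 ≤ p) {x : ℚ_[p]} (hx : ‖x‖ ≤ (p:ℝ)⁻¹) (m : ℕ) :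
    ‖((m.factorial : ℚ_[p]))⁻¹ * x ^ m‖ ≤ ((p:ℝ)⁻¹) ^ (m - m / 2) := by
  have hp0 : (0:ℝ) < p := hp0R
  have hp1 : (1:ℝ) < p := hp1R
  have hv := two_mul_val_factorial_le hp3 m
  set v := padicValNat p m.factorial with hvdef
  rw [norm_mul, norm_pow, norm_natCast_inv _ m.factorial_ne_zero]
  calc (p:ℝ)^(v:ℤ) * ‖x‖^m ≤ (p:ℝ)^(v:ℤ) * ((p:ℝ)⁻¹)^m :=
        mul_le_mul_of_nonneg_left (pow_le_pow_left₀ (norm_nonneg _) hx m)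
          (zpow_nonneg hp0.le _)
    _ = (p:ℝ)^((v:ℤ) - m) := by
        rw [inv_pow, ← zpow_natCast (p:ℝ) m, ← zpow_neg, ← zpow_add₀ hp0.ne', ← sub_eq_add_neg]
    _ ≤ (p:ℝ)^(-((m - m/2 : ℕ) : ℤ)) := zpow_le_zpow_right₀ hp1.le (by omega)
    _ = ((p:ℝ)⁻¹)^(m - m/2) := by rw [zpow_neg, zpow_natCast, inv_pow]

lemma summable_exp_series (hp3 : 3 ≤ p) {x : ℚ_[p]} (hx : ‖x‖ ≤ (p:ℝ)⁻¹) :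
    Summable (fun m : ℕ => ((m.factorial : ℚ_[p]))⁻¹ * x ^ m) := by
  apply NonarchimedeanAddGroup.summable_of_tendsto_cofinite_zero
  rw [Nat.cofinite_eq_atTop, tendsto_zero_iff_norm_tendsto_zero]
  have h2 : Tendsto (fun j : ℕ => ((p:ℝ)⁻¹) ^ j) atTop (nhds 0) :=
    tendsto_pow_atTop_nhds_zero_of_lt_one (inv_nonneg.2 hp0R.le)
      (by rw [inv_lt_one_iff₀]; right; exact hp1R)
  have hsub : Tendsto (fun m : ℕ => m - m / 2) atTop atTop := by
    rw [tendsto_atTop_atTop]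
    exact fun b => ⟨2 * b, fun m hm => by omega⟩
  exact squeeze_zero (fun m => norm_nonneg _) (exp_term_le hp3 hx) (h2.comp hsub)

lemma norm_pow_sub_pow_le {x y : ℚ_[p]} (hx : ‖x‖ ≤ (p:ℝ)⁻¹) (hy : ‖y‖ ≤ (p:ℝ)⁻¹) (m : ℕ) :
    ‖x ^ (m + 1) - y ^ (m + 1)‖ ≤ ((p:ℝ)⁻¹) ^ m * ‖x - y‖ := by
  have h0 : (0:ℝ) ≤ (p:ℝ)⁻¹ := inv_nonneg.2 hp0R.le
  rw [← geom_sum₂_mul x y (m + 1), norm_mul]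
  refine mul_le_mul_of_nonneg_right ?_ (norm_nonneg _)
  apply IsUltrametricDist.norm_sum_le_of_forall_le_of_nonneg (pow_nonneg h0 m)
  intro i hi
  have him : i ≤ m := by
    have h2 := Finset.mem_range.1 hi; omega
  rw [norm_mul, norm_pow, norm_pow]
  calc ‖x‖^i * ‖y‖^(m + 1 - 1 - i) ≤ ((p:ℝ)⁻¹)^i * ((p:ℝ)⁻¹)^(m + 1 - 1 - i) :=
      mul_le_mul (pow_le_pow_left₀ (norm_nonneg _) hx i)
        (pow_le_pow_left₀ (norm_nonneg _) hy _) (pow_nonneg (norm_nonneg _) _)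
        (pow_nonneg h0 i)
    _ = ((p:ℝ)⁻¹)^m := by rw [← pow_add]; congr 1; omega

lemma norm_padicExp_sub_le (hp3 : 3 ≤ p) {x y : ℚ_[p]} (hx : ‖x‖ ≤ (p:ℝ)⁻¹)
    (hy : ‖y‖ ≤ (p:ℝ)⁻¹) : ‖padicExp x - padicExp y‖ ≤ ‖x - y‖ := by
  have hp0 : (0:ℝ) < p := hp0R
  have hp1 : (1:ℝ) < p := hp1R
  simp only [padicExp]
  rw [← Summable.tsum_sub (summable_exp_series hp3 hx) (summable_exp_series hp3 hy)]
  apply IsUltrametricDist.norm_tsum_le_of_forall_le_of_nonneg (norm_nonneg _)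
  intro m
  rw [← mul_sub]
  rcases m with _ | m
  · simp
  · rw [norm_mul, norm_natCast_inv _ (m + 1).factorial_ne_zero]
    have hv := two_mul_val_factorial_le hp3 (m + 1)
    set v := padicValNat p (m + 1).factorial with hvdef
    have h1 := norm_pow_sub_pow_le hx hy m
    calc (p:ℝ)^(v:ℤ) * ‖x^(m+1) - y^(m+1)‖
        ≤ (p:ℝ)^(v:ℤ) * (((p:ℝ)⁻¹)^m * ‖x - y‖) :=
          mul_le_mul_of_nonneg_left h1 (zpow_nonneg hp0.le _)
      _ = (p:ℝ)^((v:ℤ) - m) * ‖x - y‖ := by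
          rw [inv_pow, ← zpow_natCast (p:ℝ) m, ← zpow_neg, ← mul_assoc,
            ← zpow_add₀ hp0.ne', ← sub_eq_add_neg]
      _ ≤ 1 * ‖x - y‖ := by
          refine mul_le_mul_of_nonneg_right ?_ (norm_nonneg _)
          have h3 : (p:ℝ)^((v:ℤ) - m) ≤ (p:ℝ)^(0:ℤ) := zpow_le_zpow_right₀ hp1.le (by omega)
          simpa using h3
      _ = ‖x - y‖ := one_mul _

lemma padicExp_zero : padicExp (0 : ℚ_[p]) = 1 := by
  simp only [padicExp]
  rw [tsum_eq_single 0 (fun m hm => by simp [zero_pow hm])]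
  simp

lemma norm_padicExp_eq_one (hp3 : 3 ≤ p) {y : ℚ_[p]} (hy : ‖y‖ ≤ (p:ℝ)⁻¹) :
    ‖padicExp y‖ = 1 := by
  have hp1 : (1:ℝ) < p := hp1R
  have h0 : ‖(0:ℚ_[p])‖ ≤ (p:ℝ)⁻¹ := by
    rw [norm_zero]; exact inv_nonneg.2 hp0R.le
  have h1 : ‖padicExp y - 1‖ < 1 := by
    have h2 := norm_padicExp_sub_le hp3 hy h0
    rw [padicExp_zero, sub_zero] at h2
    calc ‖padicExp y - 1‖ ≤ ‖y‖ := h2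
      _ ≤ (p:ℝ)⁻¹ := hy
      _ < 1 := by rw [inv_lt_one_iff₀]; right; exact hp1
  have h2 : ‖padicExp y - 1‖ ≠ ‖(1:ℚ_[p])‖ := by rw [norm_one]; exact h1.ne
  have h3 : padicExp y = (padicExp y - 1) + 1 := by ring
  rw [h3, IsUltrametricDist.norm_add_eq_max_of_norm_ne_norm h2, norm_one]
  exact max_eq_right h1.le

end BinomConvAux

/-- For `p` odd, `n ≥ 1`, `α ∈ ℤ_p` and `0 ≤ j < p^{n-1}` with `α ≡ j mod p^{n-1}`, the
series `∑_{i ≥ 0} binom(p^{-1}u_n, i)·((exp(αp) − exp(jp))/exp(jp))^i` converges in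
`Λ[1/p]` (partial sums are Cauchy for the `p`-adic topology with unit ball `Λ`), because
`((exp(αp) − exp(jp))/exp(jp))^i ∈ p^{in}·ℤ_p` and
`binom(p^{-1}u_n, i) ∈ p^{-i(n − p/(p-1))}·Λ`. -/
theorem binom_series_converges (p n : ℕ) [Fact p.Prime] (hodd : p ≠ 2) (hn : 1 ≤ n)
    (α : ℚ_[p]) (hα : ‖α‖ ≤ 1) (j : ℕ) (hj : j < p ^ (n - 1))
    (hcong : ‖α - (j : ℚ_[p])‖ ≤ (p : ℝ) ^ (-((n : ℤ) - 1))) :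
    (∀ i : ℕ, ‖(twistElt α j) ^ i‖ ≤ (p : ℝ) ^ (-((i * n : ℕ) : ℤ))) ∧
    (∀ i : ℕ, MemLambda p n (-(i : ℝ) * ((n : ℝ) - (p : ℝ) / ((p : ℝ) - 1)))
        (PowerSeries.C ((twistElt α j) ^ i) * binomGM p i)) ∧
    (∀ s : ℝ, ∃ N₀ : ℕ, ∀ N M : ℕ, N₀ ≤ N → N₀ ≤ M →
        MemLambda p n s
          ((∑ i ∈ Finset.range N, PowerSeries.C ((twistElt α j) ^ i) * binomGM p i) -
            ∑ i ∈ Finset.range M, PowerSeries.C ((twistElt α j) ^ i) * binomGM p i)) := by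
  classical
  have hp : p.Prime := Fact.out
  have hp3 : 3 ≤ p := by have := hp.two_le; omega
  have hp0 : (0:ℝ) < p := BinomConvAux.hp0R
  have hp1 : (1:ℝ) < p := BinomConvAux.hp1R
  have hxp : ‖α * (p:ℚ_[p])‖ ≤ (p:ℝ)⁻¹ := by
    rw [norm_mul, Padic.norm_p]
    exact mul_le_of_le_one_left (inv_nonneg.2 hp0.le) hα
  have hj1 : ‖((j:ℚ_[p]))‖ ≤ 1 := by
    have h2 := Padic.norm_int_le_one (p := p) (j : ℤ)
    push_cast at h2
    exact h2
  have hyp : ‖(j:ℚ_[p]) * (p:ℚ_[p])‖ ≤ (p:ℝ)⁻¹ := by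
    rw [norm_mul, Padic.norm_p]
    exact mul_le_of_le_one_left (inv_nonneg.2 hp0.le) hj1
  have htw : ‖twistElt α j‖ ≤ (p:ℝ) ^ (-(n:ℤ)) := by
    simp only [twistElt]
    rw [norm_div, BinomConvAux.norm_padicExp_eq_one hp3 hyp, div_one]
    have hd : α * (p:ℚ_[p]) - (j:ℚ_[p]) * (p:ℚ_[p]) = (α - (j:ℚ_[p])) * (p:ℚ_[p]) := by ring
    calc ‖padicExp (α * (p:ℚ_[p])) - padicExp ((j:ℚ_[p]) * (p:ℚ_[p]))‖
        ≤ ‖α * (p:ℚ_[p]) - (j:ℚ_[p]) * (p:ℚ_[p])‖ :=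
          BinomConvAux.norm_padicExp_sub_le hp3 hxp hyp
      _ = ‖α - (j:ℚ_[p])‖ * (p:ℝ)⁻¹ := by rw [hd, norm_mul, Padic.norm_p]
      _ ≤ (p:ℝ)^(-((n:ℤ) - 1)) * (p:ℝ)⁻¹ :=
          mul_le_mul_of_nonneg_right hcong (inv_nonneg.2 hp0.le)
      _ = (p:ℝ)^(-(n:ℤ)) := by
          rw [← zpow_neg_one, ← zpow_add₀ hp0.ne']
          congr 1
          ring
  have part1 : ∀ i : ℕ, ‖twistElt α j ^ i‖ ≤ (p:ℝ)^(-((i * n : ℕ) : ℤ)) := by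
    intro i
    rw [norm_pow]
    calc ‖twistElt α j‖ ^ i ≤ ((p:ℝ)^(-(n:ℤ)))^i := pow_le_pow_left₀ (norm_nonneg _) htw i
      _ = (p:ℝ)^(-((i * n : ℕ) : ℤ)) := by
          rw [← zpow_natCast ((p:ℝ)^(-(n:ℤ))) i, ← zpow_mul]
          congr 1
          push_cast
          ring
  have hterm : ∀ i : ℕ, BinomConvAux.Nice p n
      ((p:ℝ) ^ ((padicValNat p i.factorial : ℤ) - i))
      (PowerSeries.C ((twistElt α j)^i) * binomGM p i) := by
    intro i
    have h1 := BinomConvAux.nice_C (p := p) (n := n) ((twistElt α j)^i)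
    have h2 := BinomConvAux.nice_prod (p := p) (n := n) (D := (p:ℝ)^(n-1))
      (pow_nonneg hp0.le _) (fun t => BinomConvAux.nice_factor hn t) i
    have h3 := BinomConvAux.nice_C (p := p) (n := n) ((i.factorial : ℚ_[p]))⁻¹
    rw [BinomConvAux.norm_natCast_inv _ i.factorial_ne_zero] at h3
    have h4 : BinomConvAux.Nice p n
        ((p:ℝ)^((padicValNat p i.factorial : ℤ)) * ((p:ℝ)^(n-1))^i) (binomGM p i) := by
      simp only [binomGM]
      exact h3.mul (zpow_nonneg hp0.le _) (pow_nonneg (pow_nonneg hp0.le _) _) h2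
    have h5 := h1.mul (norm_nonneg _)
      (mul_nonneg (zpow_nonneg hp0.le _) (pow_nonneg (pow_nonneg hp0.le _) _)) h4
    refine h5.of_le ?_
    calc ‖(twistElt α j)^i‖ * ((p:ℝ)^((padicValNat p i.factorial : ℤ)) * ((p:ℝ)^(n-1))^i)
        ≤ (p:ℝ)^(-((i*n:ℕ):ℤ)) * ((p:ℝ)^((padicValNat p i.factorial : ℤ)) * ((p:ℝ)^(n-1))^i) :=
          mul_le_mul_of_nonneg_right (part1 i) (by positivity)
      _ = (p:ℝ)^((padicValNat p i.factorial : ℤ) - i) := by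
          rw [← pow_mul, ← zpow_natCast (p:ℝ) ((n-1)*i), ← zpow_add₀ hp0.ne',
            ← zpow_add₀ hp0.ne']
          congr 1
          have h7 : i ≤ n * i := Nat.le_mul_of_pos_left i (by omega)
          have h6 : ((n - 1) * i : ℕ) = n * i - i := by rw [Nat.sub_mul, one_mul]
          rw [h6]
          push_cast [Nat.cast_sub h7]
          ring
  refine ⟨part1, ?_, ?_⟩
  · intro i
    apply BinomConvAux.memLambda_of_nice
    refine (hterm i).of_le ?_
    have hvr := BinomConvAux.val_factorial_le_real hp3 i
    rw [show (p:ℝ)^((padicValNat p i.factorial : ℤ) - i) =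
        (p:ℝ)^((((padicValNat p i.factorial : ℤ) - i : ℤ)):ℝ) from (Real.rpow_intCast _ _).symm,
      neg_mul, neg_neg, Real.rpow_le_rpow_left_iff hp1]
    rw [Int.cast_sub, Int.cast_natCast, Int.cast_natCast]
    set d : ℝ := (p:ℝ) - 1 with hd
    have hdpos : 0 < d := by rw [hd]; linarith
    have hp3R : (3:ℝ) ≤ p := by exact_mod_cast hp3
    have hn1 : (1:ℝ) ≤ n := by exact_mod_cast hn
    have hi0 : (0:ℝ) ≤ i := Nat.cast_nonneg i
    set v : ℝ := (padicValNat p i.factorial : ℝ) with hvd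
    have hG : (v - i) * d ≤ ((i:ℝ) * ((n:ℝ) - (p:ℝ)/d)) * d := by
      have hRHS : ((i:ℝ) * ((n:ℝ) - (p:ℝ)/d)) * d = (i:ℝ)*(n:ℝ)*d - (i:ℝ)*(p:ℝ) := by
        field_simp
      rw [hRHS, sub_mul]
      have h9 : 0 ≤ (i:ℝ)*((n:ℝ)-1)*d :=
        mul_nonneg (mul_nonneg hi0 (by linarith)) hdpos.le
      have h10 : 0 ≤ (i:ℝ)*((p:ℝ)-3) := mul_nonneg hi0 (by linarith)
      have h11 : (i:ℝ)*d = (i:ℝ)*(p:ℝ) - i := by rw [hd]; ring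
      nlinarith [hvr, h9, h10, h11]
    exact le_of_mul_le_mul_right hG hdpos
  · intro s
    refine ⟨⌈2 * s⌉₊, fun N M hN hM => ?_⟩
    have hterm' : ∀ i : ℕ, ⌈2 * s⌉₊ ≤ i → BinomConvAux.Nice p n ((p:ℝ)^(-s))
        (PowerSeries.C ((twistElt α j)^i) * binomGM p i) := by
      intro i hi
      refine (hterm i).of_le ?_
      have h2v := BinomConvAux.two_mul_val_factorial_le hp3 i
      have h2s : 2 * s ≤ i := (Nat.le_ceil (2 * s)).trans (by exact_mod_cast hi)
      rw [show (p:ℝ)^((padicValNat p i.factorial : ℤ) - i) =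
          (p:ℝ)^((((padicValNat p i.factorial : ℤ) - i : ℤ)):ℝ) from
          (Real.rpow_intCast _ _).symm,
        Real.rpow_le_rpow_left_iff hp1]
      rw [Int.cast_sub, Int.cast_natCast, Int.cast_natCast]
      have h2vr : 2 * (padicValNat p i.factorial : ℝ) ≤ i := by exact_mod_cast h2v
      linarith
    have hsnn : (0:ℝ) ≤ (p:ℝ)^(-s) := le_of_lt (Real.rpow_pos_of_pos hp0 _)
    rcases le_total M N with h | h
    · apply BinomConvAux.memLambda_of_nice
      rw [← Finset.sum_Ico_eq_sub _ h]
      exact BinomConvAux.nice_sum hsnn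
        (fun i hi => hterm' i (hM.trans (Finset.mem_Ico.1 hi).1))
    · apply BinomConvAux.memLambda_of_nice
      rw [show (∑ i ∈ Finset.range N, PowerSeries.C ((twistElt α j)^i) * binomGM p i) -
          (∑ i ∈ Finset.range M, PowerSeries.C ((twistElt α j)^i) * binomGM p i) =
          -((∑ i ∈ Finset.range M, PowerSeries.C ((twistElt α j)^i) * binomGM p i) -
            (∑ i ∈ Finset.range N, PowerSeries.C ((twistElt α j)^i) * binomGM p i))
          from (neg_sub _ _).symm,
        ← Finset.sum_Ico_eq_sub _ h]
      exact (BinomConvAux.nice_sum hsnn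
        (fun i hi => hterm' i (hN.trans (Finset.mem_Ico.1 hi).1))).neg
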